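/- Let x = [[λ, −μ̄],[μ, λ̄]] ∈ SU(2) with Re(λμ) ≠ 0, Im(λμ) ≠ 0, Re(λ̄μ) ≠ 0, Im(λ̄μ) ≠ 0, and |λ| ≠ |μ|. Let P_{ij} ∈ B(M_2(ℂ)) denote the orthogonal rank-one projection onto ℂ·ξ^x_{ij}, where ξ^x_{ij} = c_i x c_j with c_1,...,c_4 the Pauli matrices and M_2(ℂ) carrying the Hilbert–Schmidt inner product. Then the commutant of the set {P_{ij} : 1 ≤ i,j ≤ 4} in B(M_2(ℂ)) ≅ M_4(ℂ) consists only of scalar multiples of the identity. -/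

import Mathlib

open Matrix

/-- The four Pauli matrices `c_1, c_2, c_3, c_4`. -/
noncomputable def pauli : Fin 4 → Matrix (Fin 2) (Fin 2) ℂ := fun i =>
  if i = 0 then 1
  else if i = 1 then !![Complex.I, 0; 0, -Complex.I]
  else if i = 2 then !![0, 1; -1, 0]
  else !![0, Complex.I; Complex.I, 0]

/-- `ξ^x_{ij} = c_i x c_j` for `x = [[λ, -μ̄],[μ, λ̄]]`. -/
noncomputable def xi (l m : ℂ) (i j : Fin 4) : Matrix (Fin 2) (Fin 2) ℂ :=
  pauli i * !![l, -(starRingEnd ℂ) m; m, (starRingEnd ℂ) l] * pauli j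

/-- The orthogonal rank-one projection of `M₂(ℂ)` (with the Hilbert–Schmidt
inner product `⟨a|b⟩ = tr(b* a)`, in which each `ξ^x_{ij}` has norm √2) onto
the line `ℂ · ξ^x_{ij}`:  `a ↦ (1/2) tr((ξ^x_{ij})* a) • ξ^x_{ij}`. -/
noncomputable def Pproj (l m : ℂ) (i j : Fin 4) :
    Matrix (Fin 2) (Fin 2) ℂ →ₗ[ℂ] Matrix (Fin 2) (Fin 2) ℂ :=
  (2 : ℂ)⁻¹ • ((LinearMap.toSpanSingleton ℂ _ (xi l m i j)) ∘ₗ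
    (Matrix.traceLinearMap (Fin 2) ℂ ℂ) ∘ₗ (LinearMap.mulLeft ℂ ((xi l m i j)ᴴ)))

private lemma Iinv : Complex.I * Complex.I⁻¹ = 1 := mul_inv_cancel₀ Complex.I_ne_zero
private lemma IinvR (a : ℂ) : a * Complex.I * Complex.I⁻¹ = a := by
  rw [mul_assoc, Iinv, mul_one]
private lemma Ipow3 : Complex.I ^ 3 = -Complex.I := by
  rw [pow_succ, Complex.I_sq]; ring
private lemma Ipow4 : Complex.I ^ 4 = 1 := by
  rw [show (4:ℕ) = 2*2 from rfl, pow_mul, Complex.I_sq]; norm_num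

lemma xi_norm (l m : ℂ) (hx' : starRingEnd ℂ l * l + starRingEnd ℂ m * m = 1) (i j : Fin 4) :
    trace ((xi l m i j)ᴴ * (xi l m i j)) = 2 := by
  fin_cases i <;> fin_cases j <;>
    · simp [xi, pauli, trace, conjTranspose, mul_apply, Fin.sum_univ_succ, Matrix.one_apply,
        _root_.map_mul, map_add]
      linear_combination (norm := (ring_nf; try simp only [Complex.I_sq, Ipow3, Ipow4, Iinv, IinvR]; try ring1)) 2 * hx'

lemma eigen (l m : ℂ) (hx' : starRingEnd ℂ l * l + starRingEnd ℂ m * m = 1)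
    (T : Matrix (Fin 2) (Fin 2) ℂ →ₗ[ℂ] Matrix (Fin 2) (Fin 2) ℂ) (i j : Fin 4)
    (hT : T ∘ₗ Pproj l m i j = Pproj l m i j ∘ₗ T) :
    ∃ a : ℂ, T (xi l m i j) = a • xi l m i j := by
  have h := LinearMap.congr_fun hT (xi l m i j)
  simp only [Pproj, LinearMap.comp_apply, LinearMap.smul_apply, LinearMap.toSpanSingleton_apply,
    Matrix.traceLinearMap_apply, LinearMap.mulLeft_apply, _root_.map_smul, smul_smul] at h
  rw [xi_norm l m hx'] at h
  rw [show (2:ℂ)⁻¹ * 2 = 1 by norm_num, one_smul] at h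
  exact ⟨_, h⟩

lemma id1 (l m : ℂ) (hx' : starRingEnd ℂ l * l + starRingEnd ℂ m * m = 1) :
    xi l m 0 1 =
      (l * starRingEnd ℂ l - m * starRingEnd ℂ m) • xi l m 1 0
      + (Complex.I * (l * starRingEnd ℂ m - starRingEnd ℂ l * m)) • xi l m 2 0
      + (l * starRingEnd ℂ m + starRingEnd ℂ l * m) • xi l m 3 0 := by
  have h : (l * starRingEnd ℂ l + m * starRingEnd ℂ m) • xi l m 0 1 =
      (l * starRingEnd ℂ l - m * starRingEnd ℂ m) • xi l m 1 0
      + (Complex.I * (l * starRingEnd ℂ m - starRingEnd ℂ l * m)) • xi l m 2 0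
      + (l * starRingEnd ℂ m + starRingEnd ℂ l * m) • xi l m 3 0 := by
    ext i j
    fin_cases i <;> fin_cases j
    all_goals
      simp [xi, pauli, mul_apply, Fin.sum_univ_succ, Matrix.one_apply]
      ring_nf
      try simp only [Complex.I_sq, Ipow3, Ipow4, Iinv, IinvR]
      try ring1
  rw [show l * starRingEnd ℂ l + m * starRingEnd ℂ m = 1 by linear_combination hx', one_smul] at h
  exact h

lemma id2 (l m : ℂ) (hx' : starRingEnd ℂ l * l + starRingEnd ℂ m * m = 1) :
    xi l m 1 1 =
      (-(l * starRingEnd ℂ l - m * starRingEnd ℂ m)) • xi l m 0 0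
      + (-(l * starRingEnd ℂ m + starRingEnd ℂ l * m)) • xi l m 2 0
      + (Complex.I * (l * starRingEnd ℂ m - starRingEnd ℂ l * m)) • xi l m 3 0 := by
  have h : (l * starRingEnd ℂ l + m * starRingEnd ℂ m) • xi l m 1 1 =
      (-(l * starRingEnd ℂ l - m * starRingEnd ℂ m)) • xi l m 0 0
      + (-(l * starRingEnd ℂ m + starRingEnd ℂ l * m)) • xi l m 2 0
      + (Complex.I * (l * starRingEnd ℂ m - starRingEnd ℂ l * m)) • xi l m 3 0 := by
    ext i j
    fin_cases i <;> fin_cases j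
    all_goals
      simp [xi, pauli, mul_apply, Fin.sum_univ_succ, Matrix.one_apply]
      ring_nf
      try simp only [Complex.I_sq, Ipow3, Ipow4, Iinv, IinvR]
      try ring1
  rw [show l * starRingEnd ℂ l + m * starRingEnd ℂ m = 1 by linear_combination hx', one_smul] at h
  exact h

lemma dec (l m : ℂ) (hx' : starRingEnd ℂ l * l + starRingEnd ℂ m * m = 1)
    (A : Matrix (Fin 2) (Fin 2) ℂ) :
    A =
      ((starRingEnd ℂ l * A 0 0 - m * A 0 1 + starRingEnd ℂ m * A 1 0 + l * A 1 1)/2) • xi l m 0 0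
      + ((starRingEnd ℂ l * A 0 0 - m * A 0 1 - starRingEnd ℂ m * A 1 0 - l * A 1 1)/(2*Complex.I)) • xi l m 1 0
      + ((starRingEnd ℂ m * A 0 0 + l * A 0 1 - starRingEnd ℂ l * A 1 0 + m * A 1 1)/2) • xi l m 2 0
      + ((starRingEnd ℂ m * A 0 0 + l * A 0 1 + starRingEnd ℂ l * A 1 0 - m * A 1 1)/(2*Complex.I)) • xi l m 3 0 := by
  have h : (l * starRingEnd ℂ l + m * starRingEnd ℂ m) • A =
      ((starRingEnd ℂ l * A 0 0 - m * A 0 1 + starRingEnd ℂ m * A 1 0 + l * A 1 1)/2) • xi l m 0 0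
      + ((starRingEnd ℂ l * A 0 0 - m * A 0 1 - starRingEnd ℂ m * A 1 0 - l * A 1 1)/(2*Complex.I)) • xi l m 1 0
      + ((starRingEnd ℂ m * A 0 0 + l * A 0 1 - starRingEnd ℂ l * A 1 0 + m * A 1 1)/2) • xi l m 2 0
      + ((starRingEnd ℂ m * A 0 0 + l * A 0 1 + starRingEnd ℂ l * A 1 0 - m * A 1 1)/(2*Complex.I)) • xi l m 3 0 := by
    ext i j
    fin_cases i <;> fin_cases j
    all_goals
      simp [xi, pauli, mul_apply, Fin.sum_univ_succ, Matrix.one_apply]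
      ring_nf
      try simp only [Complex.I_sq, Ipow3, Ipow4, Iinv, IinvR]
      try ring1
  rw [show l * starRingEnd ℂ l + m * starRingEnd ℂ m = 1 by linear_combination hx', one_smul] at h
  exact h


/-- For `x ∈ SU(2)` outside the exceptional set `S`, the commutant of the
sixteen rank-one projections `P_{ij}` in `B(M₂(ℂ)) ≅ M₄(ℂ)` consists only of
the scalar multiples of the identity. -/
theorem commutant_pauli_projections_scalar
    (l m : ℂ) (hx : ‖l‖ ^ 2 + ‖m‖ ^ 2 = 1)
    (h1 : (l * m).re ≠ 0) (h2 : (l * m).im ≠ 0)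
    (h3 : ((starRingEnd ℂ) l * m).re ≠ 0) (h4 : ((starRingEnd ℂ) l * m).im ≠ 0)
    (h5 : ‖l‖ ≠ ‖m‖)
    (T : Matrix (Fin 2) (Fin 2) ℂ →ₗ[ℂ] Matrix (Fin 2) (Fin 2) ℂ)
    (hT : ∀ i j : Fin 4, T ∘ₗ Pproj l m i j = Pproj l m i j ∘ₗ T) :
    ∃ c : ℂ, T = c • LinearMap.id := by
  have habs : ∀ z : ℂ, starRingEnd ℂ z * z = ((‖z‖ ^ 2 : ℝ) : ℂ) := by
    intro z
    rw [Complex.sq_norm, Complex.normSq_eq_conj_mul_self]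
  have hx' : starRingEnd ℂ l * l + starRingEnd ℂ m * m = 1 := by
    rw [habs, habs, ← Complex.ofReal_add, hx, Complex.ofReal_one]
  have hD : l * starRingEnd ℂ l - m * starRingEnd ℂ m ≠ 0 := by
    rw [mul_comm l, mul_comm m, habs, habs, ← Complex.ofReal_sub]
    rw [Ne, Complex.ofReal_eq_zero, sub_eq_zero]
    intro h
    rcases h5.lt_or_gt with hlt | hlt <;>
      nlinarith [norm_nonneg l, norm_nonneg m]
  have hP : l * starRingEnd ℂ m + starRingEnd ℂ l * m ≠ 0 := by
    have h := Complex.add_conj (starRingEnd ℂ l * m)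
    rw [_root_.map_mul, Complex.conj_conj] at h
    rw [add_comm, h]
    simp only [Ne, Complex.ofReal_eq_zero]
    intro hh; exact h3 (by linarith)
  have hQ : Complex.I * (l * starRingEnd ℂ m - starRingEnd ℂ l * m) ≠ 0 := by
    refine mul_ne_zero Complex.I_ne_zero ?_
    have h := Complex.sub_conj (starRingEnd ℂ l * m)
    rw [_root_.map_mul, Complex.conj_conj] at h
    rw [← neg_sub, neg_ne_zero, h]
    refine mul_ne_zero ?_ Complex.I_ne_zero
    simp only [Ne, Complex.ofReal_eq_zero]
    intro hh; exact h4 (by linarith)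
  obtain ⟨a0, h00⟩ := eigen l m hx' T 0 0 (hT 0 0)
  obtain ⟨a1, h10⟩ := eigen l m hx' T 1 0 (hT 1 0)
  obtain ⟨a2, h20⟩ := eigen l m hx' T 2 0 (hT 2 0)
  obtain ⟨a3, h30⟩ := eigen l m hx' T 3 0 (hT 3 0)
  obtain ⟨b, h01⟩ := eigen l m hx' T 0 1 (hT 0 1)
  obtain ⟨e, h11⟩ := eigen l m hx' T 1 1 (hT 1 1)
  set D : ℂ := l * starRingEnd ℂ l - m * starRingEnd ℂ m with hDdef
  set Q : ℂ := Complex.I * (l * starRingEnd ℂ m - starRingEnd ℂ l * m) with hQdef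
  set P : ℂ := l * starRingEnd ℂ m + starRingEnd ℂ l * m with hPdef
  have e1 : (D * a1) • xi l m 1 0 + (Q * a2) • xi l m 2 0 + (P * a3) • xi l m 3 0
      = (b * D) • xi l m 1 0 + (b * Q) • xi l m 2 0 + (b * P) • xi l m 3 0 := by
    have he1 : T (xi l m 0 1) = (D * a1) • xi l m 1 0 + (Q * a2) • xi l m 2 0
        + (P * a3) • xi l m 3 0 := by
      rw [id1 l m hx', map_add, map_add, _root_.map_smul, _root_.map_smul, _root_.map_smul,
        h10, h20, h30, smul_smul, smul_smul, smul_smul]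
    have he2 : T (xi l m 0 1) = (b * D) • xi l m 1 0 + (b * Q) • xi l m 2 0
        + (b * P) • xi l m 3 0 := by
      rw [h01, id1 l m hx', smul_add, smul_add, smul_smul, smul_smul, smul_smul]
    rw [← he1, he2]
  have e2 : (-D * a0) • xi l m 0 0 + (-P * a2) • xi l m 2 0 + (Q * a3) • xi l m 3 0
      = (e * -D) • xi l m 0 0 + (e * -P) • xi l m 2 0 + (e * Q) • xi l m 3 0 := by
    have he1 : T (xi l m 1 1) = (-D * a0) • xi l m 0 0 + (-P * a2) • xi l m 2 0
        + (Q * a3) • xi l m 3 0 := by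
      rw [id2 l m hx', map_add, map_add, _root_.map_smul, _root_.map_smul, _root_.map_smul,
        h00, h20, h30, smul_smul, smul_smul, smul_smul]
    have he2 : T (xi l m 1 1) = (e * -D) • xi l m 0 0 + (e * -P) • xi l m 2 0
        + (e * Q) • xi l m 3 0 := by
      rw [h11, id2 l m hx', smul_add, smul_add, smul_smul, smul_smul, smul_smul]
    rw [← he1, he2]
  have e100 := congrFun (congrFun e1 0) 0
  have e101 := congrFun (congrFun e1 0) 1
  have e110 := congrFun (congrFun e1 1) 0
  have e111 := congrFun (congrFun e1 1) 1
  have e200 := congrFun (congrFun e2 0) 0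
  have e201 := congrFun (congrFun e2 0) 1
  have e210 := congrFun (congrFun e2 1) 0
  have e211 := congrFun (congrFun e2 1) 1
  simp [xi, pauli, mul_apply, Fin.sum_univ_succ, Matrix.one_apply, Matrix.add_apply,
    Matrix.smul_apply, smul_eq_mul] at e100 e101 e110 e111 e200 e201 e210 e211
  set L : ℂ := starRingEnd ℂ l with hLdef
  set M : ℂ := starRingEnd ℂ m with hMdef
  have k1 : a1 = b := by
    have hz : D * (a1 - b) = 0 := by
      linear_combination (norm := (ring_nf; try simp only [Complex.I_sq, Ipow3, Ipow4]; try ring1)) (-Complex.I*L/2) * e100 + (Complex.I*m/2) * e101 + (Complex.I*M/2) * e110 + (Complex.I*l/2) * e111 - (D*(a1-b)) * hx'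
    rcases mul_eq_zero.1 hz with h | h
    · exact absurd h hD
    · exact sub_eq_zero.1 h
  have k2 : a2 = b := by
    have hz : Q * (a2 - b) = 0 := by
      linear_combination (M/2) * e100 + (l/2) * e101 - (L/2) * e110 + (m/2) * e111
        - (Q*(a2-b)) * hx'
    rcases mul_eq_zero.1 hz with h | h
    · exact absurd h hQ
    · exact sub_eq_zero.1 h
  have k3 : a3 = b := by
    have hz : P * (a3 - b) = 0 := by
      linear_combination (norm := (ring_nf; try simp only [Complex.I_sq, Ipow3, Ipow4]; try ring1)) (-Complex.I*M/2) * e100 + (-Complex.I*l/2) * e101 + (-Complex.I*L/2) * e110 + (Complex.I*m/2) * e111 - (P*(a3-b)) * hx'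
    rcases mul_eq_zero.1 hz with h | h
    · exact absurd h hP
    · exact sub_eq_zero.1 h
  have k4 : a0 = e := by
    have hz : D * (a0 - e) = 0 := by
      linear_combination (-L/2) * e200 + (m/2) * e201 - (M/2) * e210 - (l/2) * e211
        - (D*(a0-e)) * hx'
    rcases mul_eq_zero.1 hz with h | h
    · exact absurd h hD
    · exact sub_eq_zero.1 h
  have k5 : a2 = e := by
    have hz : P * (a2 - e) = 0 := by
      linear_combination (-M/2) * e200 - (l/2) * e201 + (L/2) * e210 - (m/2) * e211
        - (P*(a2-e)) * hx'
    rcases mul_eq_zero.1 hz with h | h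
    · exact absurd h hP
    · exact sub_eq_zero.1 h
  have k0 : a0 = b := by rw [k4, ← k5, k2]
  refine ⟨b, ?_⟩
  apply LinearMap.ext
  intro A
  have hA := dec l m hx' A
  simp only [LinearMap.smul_apply, LinearMap.id_apply]
  conv_lhs => rw [hA]
  conv_rhs => rw [hA]
  rw [map_add, map_add, map_add, _root_.map_smul, _root_.map_smul, _root_.map_smul,
    _root_.map_smul, h00, h10, h20, h30, k0, k1, k2, k3]
  module
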